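/- Let Q be a symmetric (n−f)×(n−f) matrix with nonnegative entries, eigenvalues λ₁(Q) ≤ 1, second-largest absolute eigenvalue at most λ < 1, and ℓ₂-normalized nonnegative first eigenvector φ₁. Then for any ρ ∈ [0,1) with (1−ρ)λ₁(Q) < 1, the matrix (I − (1−ρ)Q)^{-1} = Σ_{t≥0}(1−ρ)^t Q^t satisfies, entrywise, (I − (1−ρ)Q)^{-1} ⪯ I + (1/(1 − (1−ρ)λ₁(Q))) φ₁φ₁ᵀ + (λ(1−ρ)/(1 − λ(1−ρ))) J, where J is the all-ones matrix. -/

import Mathlib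

open Matrix Finset

/-- Let `Q` be a symmetric `m × m` real matrix with nonnegative
entries, an orthonormal eigenbasis `φ` with eigenvalues `μ`, whose largest
eigenvalue `λ₁(Q) = μ 0 ≤ 1` has an (entrywise) nonnegative ℓ₂-normalized
eigenvector `φ 0`, and all other eigenvalues at most `lam < 1` in absolute value.
Then for any `ρ ∈ [0,1)` with `(1−ρ)·λ₁(Q) < 1`, the Neumann series
`Σ_{t≥0} (1−ρ)^t Q^t` converges to `(I − (1−ρ)Q)⁻¹` and, entrywise,
`(I − (1−ρ)Q)⁻¹ ⪯ I + (1/(1 − (1−ρ)λ₁(Q))) φ₁φ₁ᵀ + (lam(1−ρ)/(1 − lam(1−ρ))) J`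
where `J` is the all-ones matrix. -/
theorem stmt_15 {m : ℕ} (hm : 0 < m) (Q : Matrix (Fin m) (Fin m) ℝ)
    (hsymm : Q.IsSymm) (hpos : ∀ i j, 0 ≤ Q i j)
    (μ : Fin m → ℝ) (φ : Fin m → Fin m → ℝ)
    (horth : ∀ a b, ∑ i, φ a i * φ b i = if a = b then (1 : ℝ) else 0)
    (heig : ∀ a, Q.mulVec (φ a) = μ a • φ a)
    (htop : ∀ a, μ a ≤ μ ⟨0, hm⟩)
    (hone : μ ⟨0, hm⟩ ≤ 1)
    (hφpos : ∀ i, 0 ≤ φ ⟨0, hm⟩ i)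
    (lam : ℝ) (hlam0 : 0 ≤ lam) (hlam1 : lam < 1)
    (hlam : ∀ a, a ≠ ⟨0, hm⟩ → |μ a| ≤ lam)
    (ρ : ℝ) (hρ0 : 0 ≤ ρ) (hρ1 : ρ < 1)
    (hcontr : (1 - ρ) * μ ⟨0, hm⟩ < 1) :
    HasSum (fun t : ℕ => (1 - ρ) ^ t • Q ^ t) (1 - (1 - ρ) • Q)⁻¹ ∧
    ∀ i j, ((1 - (1 - ρ) • Q)⁻¹) i j ≤
        (1 : Matrix (Fin m) (Fin m) ℝ) i j
          + (1 / (1 - (1 - ρ) * μ ⟨0, hm⟩)) * (φ ⟨0, hm⟩ i * φ ⟨0, hm⟩ j)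
          + lam * (1 - ρ) / (1 - lam * (1 - ρ)) := by
  set z : Fin m := ⟨0, hm⟩ with hz
  set c : Fin m → ℝ := fun a => (1 - ρ) * μ a with hc
  have h1ρ0 : 0 < 1 - ρ := by linarith
  have h1ρ1 : 1 - ρ ≤ 1 := by linarith
  -- column orthonormality
  have hcol : ∀ i j, ∑ a, φ a i * φ a j = if i = j then (1 : ℝ) else 0 := by
    have hPPt : (Matrix.of φ) * (Matrix.of φ)ᵀ = 1 := by
      ext a b
      simpa [Matrix.mul_apply, Matrix.one_apply] using horth a b
    have hPtP := mul_eq_one_comm.mp hPPt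
    intro i j
    have h := congrFun (congrFun hPtP i) j
    simpa [Matrix.mul_apply, Matrix.one_apply] using h
  -- μ z ≥ 0
  have hμz0 : 0 ≤ μ z := by
    obtain ⟨i, hi⟩ : ∃ i, 0 < φ z i := by
      by_contra h
      push_neg at h
      have hzero : ∀ i, φ z i = 0 := fun i => le_antisymm (h i) (hφpos i)
      have h1 := horth z z
      simp [hzero] at h1
    have h0 : 0 ≤ (Q.mulVec (φ z)) i := by
      simp only [Matrix.mulVec, dotProduct]
      exact Finset.sum_nonneg fun k _ => mul_nonneg (hpos i k) (hφpos k)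
    rw [heig z] at h0
    simp only [Pi.smul_apply, smul_eq_mul] at h0
    nlinarith
  have hca : ∀ a, |c a| < 1 := by
    intro a
    by_cases ha : a = z
    · subst ha
      rw [abs_of_nonneg (mul_nonneg h1ρ0.le hμz0)]
      exact hcontr
    · calc |c a| = (1 - ρ) * |μ a| := by
            rw [hc, abs_mul, abs_of_nonneg h1ρ0.le]
        _ ≤ 1 * lam := mul_le_mul h1ρ1 (hlam a ha) (abs_nonneg _) zero_le_one
        _ < 1 := by linarith
  have hca1 : ∀ a, 0 < 1 - c a := fun a => by
    have := (abs_lt.mp (hca a)).2; linarith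
  -- spectral decomposition of powers
  have hrow : ∀ a j, ∑ k, φ a k * Q k j = μ a * φ a j := by
    intro a j
    have h := congrFun (heig a) j
    simp only [Matrix.mulVec, dotProduct, Pi.smul_apply, smul_eq_mul] at h
    rw [← h]
    exact Finset.sum_congr rfl fun k _ => by rw [hsymm.apply j k]; ring
  have hQt : ∀ (t : ℕ) (i j : Fin m), (Q ^ t) i j = ∑ a, μ a ^ t * (φ a i * φ a j) := by
    intro t
    induction t with
    | zero =>
      intro i j
      simp only [pow_zero, one_mul]
      rw [hcol i j, Matrix.one_apply]
    | succ t ih =>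
      intro i j
      rw [pow_succ, Matrix.mul_apply]
      calc ∑ k, (Q ^ t) i k * Q k j
          = ∑ k, ∑ a, μ a ^ t * φ a i * (φ a k * Q k j) := by
            refine Finset.sum_congr rfl fun k _ => ?_
            rw [ih i k, Finset.sum_mul]
            exact Finset.sum_congr rfl fun a _ => by ring
        _ = ∑ a, μ a ^ t * φ a i * ∑ k, φ a k * Q k j := by
            rw [Finset.sum_comm]
            exact Finset.sum_congr rfl fun a _ => (Finset.mul_sum _ _ _).symm
        _ = ∑ a, μ a ^ (t + 1) * (φ a i * φ a j) := by
            refine Finset.sum_congr rfl fun a _ => ?_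
            rw [hrow a j, pow_succ]
            ring
  -- the limit matrix
  set S : Matrix (Fin m) (Fin m) ℝ :=
    Matrix.of (fun i j => ∑ a, (1 - c a)⁻¹ * (φ a i * φ a j)) with hSdef
  have hSapp : ∀ i j, S i j = ∑ a, (1 - c a)⁻¹ * (φ a i * φ a j) := fun i j => rfl
  have hsum : HasSum (fun t : ℕ => (1 - ρ) ^ t • Q ^ t) S := by
    refine Pi.hasSum.mpr fun i => Pi.hasSum.mpr fun j => ?_
    have h1 : ∀ t : ℕ, ((1 - ρ) ^ t • Q ^ t) i j = ∑ a, c a ^ t * (φ a i * φ a j) := by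
      intro t
      rw [Matrix.smul_apply, smul_eq_mul, hQt t i j, Finset.mul_sum]
      refine Finset.sum_congr rfl fun a _ => ?_
      simp only [hc, mul_pow]
      ring
    simp only [h1, hSapp]
    exact hasSum_sum fun a _ => (hasSum_geometric_of_abs_lt_one (hca a)).mul_right _
  -- S is the inverse
  have hmul : (1 - (1 - ρ) • Q) * S = 1 := by
    ext i j
    rw [Matrix.mul_apply, Matrix.one_apply]
    have hstep : ∀ k, (1 - (1 - ρ) • Q) i k * S k j
        = (1 : Matrix (Fin m) (Fin m) ℝ) i k * S k j - (1 - ρ) * Q i k * S k j := by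
      intro k
      simp only [Matrix.sub_apply, Matrix.smul_apply, smul_eq_mul]
      ring
    rw [Finset.sum_congr rfl fun k _ => hstep k, Finset.sum_sub_distrib]
    have h1 : ∑ k, (1 : Matrix (Fin m) (Fin m) ℝ) i k * S k j = S i j := by
      simp [Matrix.one_apply, ite_mul]
    have h2 : ∑ k, (1 - ρ) * Q i k * S k j = ∑ a, (1 - c a)⁻¹ * c a * (φ a i * φ a j) := by
      calc ∑ k, (1 - ρ) * Q i k * S k j
          = ∑ k, ∑ a, (1 - c a)⁻¹ * (1 - ρ) * φ a j * (φ a k * Q k i) := by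
            refine Finset.sum_congr rfl fun k _ => ?_
            rw [hSapp k j, Finset.mul_sum]
            refine Finset.sum_congr rfl fun a _ => ?_
            rw [hsymm.apply k i]
            ring
        _ = ∑ a, (1 - c a)⁻¹ * (1 - ρ) * φ a j * ∑ k, φ a k * Q k i := by
            rw [Finset.sum_comm]
            exact Finset.sum_congr rfl fun a _ => (Finset.mul_sum _ _ _).symm
        _ = ∑ a, (1 - c a)⁻¹ * c a * (φ a i * φ a j) := by
            refine Finset.sum_congr rfl fun a _ => ?_
            rw [hrow a i, hc]
            ring
    rw [h1, h2, hSapp i j, ← Finset.sum_sub_distrib]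
    rw [← hcol i j]
    refine Finset.sum_congr rfl fun a _ => ?_
    have hne : (1 - c a) ≠ 0 := ne_of_gt (hca1 a)
    field_simp
  have hinv : (1 - (1 - ρ) • Q)⁻¹ = S := Matrix.inv_eq_right_inv hmul
  refine ⟨hinv ▸ hsum, ?_⟩
  intro i j
  rw [hinv]
  -- Cauchy–Schwarz bound
  have hdiag : ∀ i : Fin m, ∑ a, φ a i ^ 2 = 1 := by
    intro i
    have h := hcol i i
    rw [if_pos rfl] at h
    rw [← h]
    exact Finset.sum_congr rfl fun a _ => (sq (φ a i))
  have hCS : ∀ i j : Fin m, ∑ a, |φ a i| * |φ a j| ≤ 1 := by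
    intro i j
    have h2 := Finset.sum_mul_sq_le_sq_mul_sq Finset.univ (fun a => |φ a i|) (fun a => |φ a j|)
    simp only [sq_abs] at h2
    rw [hdiag i, hdiag j] at h2
    have h3 : (0 : ℝ) ≤ ∑ a, |φ a i| * |φ a j| :=
      Finset.sum_nonneg fun a _ => mul_nonneg (abs_nonneg _) (abs_nonneg _)
    nlinarith
  set L : ℝ := lam * (1 - ρ) with hL
  have hL0 : 0 ≤ L := mul_nonneg hlam0 h1ρ0.le
  have hL1 : L < 1 := by
    calc L ≤ lam * 1 := mul_le_mul_of_nonneg_left h1ρ1 hlam0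
      _ < 1 := by linarith
  have hL1' : 0 < 1 - L := by linarith
  have hcaL : ∀ a, a ≠ z → |c a| ≤ L := by
    intro a ha
    calc |c a| = (1 - ρ) * |μ a| := by rw [hc, abs_mul, abs_of_nonneg h1ρ0.le]
      _ ≤ (1 - ρ) * lam := mul_le_mul_of_nonneg_left (hlam a ha) h1ρ0.le
      _ = L := by rw [hL]; ring
  -- split off the top eigenvector
  have hSsplit : S i j = (1 - c z)⁻¹ * (φ z i * φ z j)
      + ∑ a ∈ Finset.univ.erase z, (1 - c a)⁻¹ * (φ a i * φ a j) := by
    rw [hSapp i j, ← Finset.add_sum_erase _ _ (Finset.mem_univ z)]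
  have hrest : ∑ a ∈ Finset.univ.erase z, (1 - c a)⁻¹ * (φ a i * φ a j)
      ≤ (1 : Matrix (Fin m) (Fin m) ℝ) i j + L / (1 - L) := by
    have hsplit2 : ∀ a, (1 - c a)⁻¹ * (φ a i * φ a j)
        = φ a i * φ a j + c a * (1 - c a)⁻¹ * (φ a i * φ a j) := by
      intro a
      have hne : (1 - c a) ≠ 0 := ne_of_gt (hca1 a)
      field_simp
      ring
    rw [Finset.sum_congr rfl fun a _ => hsplit2 a, Finset.sum_add_distrib]
    have hb1 : ∑ a ∈ Finset.univ.erase z, φ a i * φ a j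
        ≤ (1 : Matrix (Fin m) (Fin m) ℝ) i j := by
      have hzz : 0 ≤ φ z i * φ z j := mul_nonneg (hφpos i) (hφpos j)
      have h : ∑ a ∈ Finset.univ.erase z, φ a i * φ a j
          = (∑ a, φ a i * φ a j) - φ z i * φ z j :=
        Finset.sum_erase_eq_sub (Finset.mem_univ z)
      rw [h, hcol i j, Matrix.one_apply]
      linarith
    have hb2 : ∑ a ∈ Finset.univ.erase z, c a * (1 - c a)⁻¹ * (φ a i * φ a j)
        ≤ L / (1 - L) := by
      have hterm : ∀ a ∈ Finset.univ.erase z,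
          c a * (1 - c a)⁻¹ * (φ a i * φ a j) ≤ L / (1 - L) * (|φ a i| * |φ a j|) := by
        intro a ha
        have haz : a ≠ z := Finset.ne_of_mem_erase ha
        have h1 : c a * (1 - c a)⁻¹ * (φ a i * φ a j)
            ≤ |c a * (1 - c a)⁻¹ * (φ a i * φ a j)| := le_abs_self _
        have h2 : |c a * (1 - c a)⁻¹ * (φ a i * φ a j)|
            = |c a| * (1 - c a)⁻¹ * (|φ a i| * |φ a j|) := by
          rw [abs_mul, abs_mul (c a), abs_mul (φ a i),
            abs_of_nonneg (inv_nonneg.mpr (hca1 a).le)]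
        have h3 : |c a| * (1 - c a)⁻¹ ≤ L / (1 - L) := by
          have hge : 1 - L ≤ 1 - c a := by
            have := (abs_lt.mp (hca a)).2
            have hle := le_abs_self (c a)
            have := hcaL a haz
            linarith
          have hinvle : (1 - c a)⁻¹ ≤ (1 - L)⁻¹ :=
            inv_anti₀ hL1' hge
          calc |c a| * (1 - c a)⁻¹ ≤ L * (1 - L)⁻¹ :=
                mul_le_mul (hcaL a haz) hinvle (inv_nonneg.mpr (hca1 a).le) hL0
            _ = L / (1 - L) := (div_eq_mul_inv L (1 - L)).symm
        calc c a * (1 - c a)⁻¹ * (φ a i * φ a j)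
            ≤ |c a| * (1 - c a)⁻¹ * (|φ a i| * |φ a j|) := h2 ▸ h1
          _ ≤ L / (1 - L) * (|φ a i| * |φ a j|) :=
              mul_le_mul_of_nonneg_right h3 (mul_nonneg (abs_nonneg _) (abs_nonneg _))
      calc ∑ a ∈ Finset.univ.erase z, c a * (1 - c a)⁻¹ * (φ a i * φ a j)
          ≤ ∑ a ∈ Finset.univ.erase z, L / (1 - L) * (|φ a i| * |φ a j|) :=
            Finset.sum_le_sum hterm
        _ ≤ ∑ a, L / (1 - L) * (|φ a i| * |φ a j|) := by
            refine Finset.sum_le_sum_of_subset_of_nonneg (Finset.subset_univ _) ?_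
            intro a _ _
            exact mul_nonneg (div_nonneg hL0 hL1'.le)
              (mul_nonneg (abs_nonneg _) (abs_nonneg _))
        _ = L / (1 - L) * ∑ a, |φ a i| * |φ a j| := (Finset.mul_sum _ _ _).symm
        _ ≤ L / (1 - L) * 1 :=
            mul_le_mul_of_nonneg_left (hCS i j) (div_nonneg hL0 hL1'.le)
        _ = L / (1 - L) := mul_one _
    linarith
  have hgoal : (1 : ℝ) / (1 - c z) = (1 - c z)⁻¹ := one_div _
  rw [hSsplit]
  rw [hgoal]
  linarith [hrest]
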